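/- Let A be an associative unital algebra and r ∈ A ⊗ A. With r^{12} = r⊗u, r^{23} = u⊗r, r^{13} the corresponding embeddings into A⊗A⊗A, define the Schouten bracket [[r,r]] = [r^{12},r^{13}] + [r^{12},r^{23}] + [r^{13},r^{23}]. Then ad_{[[r,r]]} = [[ad_r, ad_r]] as operators on A⊗A⊗A, where for an operator P on A⊗A, [[P,P]] = [P^{12},P^{13}] + [P^{12},P^{23}] + [P^{13},P^{23}]. -/

import Mathlib

open TensorProduct

private lemma adc_aux {R : Type*} [Ring R] (u v x : R) :
    (u * (v * x - x * v) - (v * x - x * v) * u)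
      - (v * (u * x - x * u) - (u * x - x * u) * v)
    = (u * v - v * u) * x - x * (u * v - v * u) := by
  noncomm_ring

set_option maxHeartbeats 1000000 in
set_option synthInstance.maxHeartbeats 400000 in
/-- For `r ∈ A ⊗ A` with `r^{12}, r^{13}, r^{23} ∈ A ⊗ A ⊗ A` and the operator
`P = ad_r` on `A ⊗ A`, the adjoint action of the Schouten element
`[[r,r]] = [r^{12},r^{13}] + [r^{12},r^{23}] + [r^{13},r^{23}]` on `A ⊗ A ⊗ A`
equals the operator Schouten bracket `[P^{12},P^{13}] + [P^{12},P^{23}] + [P^{13},P^{23}]`. -/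
theorem ad_schouten_eq_operator_schouten
    (A : Type*) [Ring A] [Algebra ℝ A]
    (r : A ⊗[ℝ] A)
    (e12 e13 e23 : A ⊗[ℝ] A →ₗ[ℝ] A ⊗[ℝ] (A ⊗[ℝ] A))
    (he12 : ∀ a b : A, e12 (a ⊗ₜ b) = a ⊗ₜ (b ⊗ₜ (1 : A)))
    (he13 : ∀ a b : A, e13 (a ⊗ₜ b) = a ⊗ₜ ((1 : A) ⊗ₜ b))
    (he23 : ∀ a b : A, e23 (a ⊗ₜ b) = (1 : A) ⊗ₜ (a ⊗ₜ b))
    (P : A ⊗[ℝ] A →ₗ[ℝ] A ⊗[ℝ] A)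
    (hP : ∀ x, P x = r * x - x * r)
    (σ : A ⊗[ℝ] (A ⊗[ℝ] A) →ₗ[ℝ] A ⊗[ℝ] (A ⊗[ℝ] A))
    (hσ : ∀ a b c : A, σ (a ⊗ₜ (b ⊗ₜ c)) = a ⊗ₜ (c ⊗ₜ b))
    (P12 P13 P23 : A ⊗[ℝ] (A ⊗[ℝ] A) →ₗ[ℝ] A ⊗[ℝ] (A ⊗[ℝ] A))
    (hP12 : ∀ (x : A ⊗[ℝ] A) (c : A),
      P12 ((TensorProduct.assoc ℝ A A A) (x ⊗ₜ c)) =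
        (TensorProduct.assoc ℝ A A A) ((P x) ⊗ₜ c))
    (hP23 : ∀ (a : A) (y : A ⊗[ℝ] A), P23 (a ⊗ₜ y) = a ⊗ₜ P y)
    (hP13 : ∀ X, P13 X = σ (P12 (σ X))) :
    ∀ X : A ⊗[ℝ] (A ⊗[ℝ] A),
      ((e12 r * e13 r - e13 r * e12 r) + (e12 r * e23 r - e23 r * e12 r)
          + (e13 r * e23 r - e23 r * e13 r)) * X
        - X * ((e12 r * e13 r - e13 r * e12 r) + (e12 r * e23 r - e23 r * e12 r)
          + (e13 r * e23 r - e23 r * e13 r))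
      = ((P12 ∘ₗ P13 - P13 ∘ₗ P12) + (P12 ∘ₗ P23 - P23 ∘ₗ P12)
          + (P13 ∘ₗ P23 - P23 ∘ₗ P13)) X := by
  classical
  -- σ on pure-in-first-slot tensors
  have hσ' : ∀ (a : A) (z : A ⊗[ℝ] A),
      σ (a ⊗ₜ z) = a ⊗ₜ ((Algebra.TensorProduct.comm ℝ A A) z) := by
    intro a z
    induction z using TensorProduct.induction_on with
    | zero => rw [tmul_zero, map_zero, map_zero, tmul_zero]
    | tmul b c => rw [hσ, Algebra.TensorProduct.comm_tmul]
    | add x y hx hy => rw [tmul_add, map_add, hx, hy, map_add, tmul_add]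
  have hσσ : ∀ X, σ (σ X) = X := by
    intro X
    induction X using TensorProduct.induction_on with
    | zero => rw [map_zero, map_zero]
    | tmul a z =>
        rw [hσ', hσ']
        congr 1
        induction z using TensorProduct.induction_on with
        | zero => rw [map_zero, map_zero]
        | tmul b c => rw [Algebra.TensorProduct.comm_tmul, Algebra.TensorProduct.comm_tmul]
        | add x y hx hy => rw [map_add, map_add, hx, hy]
    | add x y hx hy => rw [map_add, map_add, hx, hy]
  have hσmul : ∀ X Y, σ (X * Y) = σ X * σ Y := by
    intro X Y
    induction X using TensorProduct.induction_on with
    | zero => rw [zero_mul, map_zero, zero_mul]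
    | tmul a x =>
        induction Y using TensorProduct.induction_on with
        | zero => rw [mul_zero, map_zero, mul_zero]
        | tmul b y =>
            rw [Algebra.TensorProduct.tmul_mul_tmul, hσ', hσ', hσ', map_mul,
              Algebra.TensorProduct.tmul_mul_tmul]
        | add y z hy hz => rw [mul_add, map_add, hy, hz, map_add, mul_add]
    | add x y hx hy => rw [add_mul, map_add, hx, hy, map_add, add_mul]
  -- product lemmas
  have h12L : ∀ (s : A ⊗[ℝ] A) (a b c : A),
      e12 s * (a ⊗ₜ (b ⊗ₜ c)) =
        (TensorProduct.assoc ℝ A A A) ((s * (a ⊗ₜ b)) ⊗ₜ c) := by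
    intro s a b c
    induction s using TensorProduct.induction_on with
    | zero => rw [map_zero, zero_mul, zero_mul, zero_tmul, map_zero]
    | tmul p q =>
        rw [he12, Algebra.TensorProduct.tmul_mul_tmul,
          Algebra.TensorProduct.tmul_mul_tmul, Algebra.TensorProduct.tmul_mul_tmul,
          one_mul, assoc_tmul]
    | add x y hx hy =>
        rw [map_add, add_mul, hx, hy, add_mul, add_tmul, map_add]
  have h12R : ∀ (s : A ⊗[ℝ] A) (a b c : A),
      (a ⊗ₜ (b ⊗ₜ c)) * e12 s =
        (TensorProduct.assoc ℝ A A A) (((a ⊗ₜ b) * s) ⊗ₜ c) := by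
    intro s a b c
    induction s using TensorProduct.induction_on with
    | zero => rw [map_zero, mul_zero, mul_zero, zero_tmul, map_zero]
    | tmul p q =>
        rw [he12, Algebra.TensorProduct.tmul_mul_tmul,
          Algebra.TensorProduct.tmul_mul_tmul, Algebra.TensorProduct.tmul_mul_tmul,
          mul_one, assoc_tmul]
    | add x y hx hy =>
        rw [map_add, mul_add, hx, hy, mul_add, add_tmul, map_add]
  have h23L : ∀ (s : A ⊗[ℝ] A) (a : A) (y : A ⊗[ℝ] A),
      e23 s * (a ⊗ₜ y) = a ⊗ₜ (s * y) := by
    intro s a y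
    induction s using TensorProduct.induction_on with
    | zero => rw [map_zero, zero_mul, zero_mul, tmul_zero]
    | tmul p q => rw [he23, Algebra.TensorProduct.tmul_mul_tmul, one_mul]
    | add x z hx hz => rw [map_add, add_mul, hx, hz, add_mul, tmul_add]
  have h23R : ∀ (s : A ⊗[ℝ] A) (a : A) (y : A ⊗[ℝ] A),
      (a ⊗ₜ y) * e23 s = a ⊗ₜ (y * s) := by
    intro s a y
    induction s using TensorProduct.induction_on with
    | zero => rw [map_zero, mul_zero, mul_zero, tmul_zero]
    | tmul p q => rw [he23, Algebra.TensorProduct.tmul_mul_tmul, mul_one]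
    | add x z hx hz => rw [map_add, mul_add, hx, hz, mul_add, tmul_add]
  -- ad forms
  have hP12' : ∀ X, P12 X = e12 r * X - X * e12 r := by
    intro X
    induction X using TensorProduct.induction_on with
    | zero => rw [map_zero, mul_zero, zero_mul, sub_zero]
    | tmul a y =>
        induction y using TensorProduct.induction_on with
        | zero => rw [tmul_zero, map_zero, mul_zero, zero_mul, sub_zero]
        | tmul b c =>
            have h := hP12 (a ⊗ₜ b) c
            rw [assoc_tmul] at h
            rw [h, hP, sub_tmul, map_sub, h12L, h12R]
        | add y z hy hz =>
            rw [tmul_add, map_add, hy, hz, mul_add, add_mul]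
            abel
    | add x y hx hy =>
        rw [map_add, hx, hy, mul_add, add_mul]
        abel
  have hP23' : ∀ X, P23 X = e23 r * X - X * e23 r := by
    intro X
    induction X using TensorProduct.induction_on with
    | zero => rw [map_zero, mul_zero, zero_mul, sub_zero]
    | tmul a y => rw [hP23, hP, tmul_sub, h23L, h23R]
    | add x y hx hy =>
        rw [map_add, hx, hy, mul_add, add_mul]
        abel
  have h13' : ∀ s : A ⊗[ℝ] A, σ (e12 s) = e13 s := by
    intro s
    induction s using TensorProduct.induction_on with
    | zero => rw [map_zero, map_zero, map_zero]
    | tmul p q => rw [he12, hσ, he13]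
    | add x y hx hy => rw [map_add, map_add, hx, hy, map_add]
  have h13 : σ (e12 r) = e13 r := h13' r
  have hP13' : ∀ X, P13 X = e13 r * X - X * e13 r := by
    intro X
    rw [hP13, hP12' (σ X), map_sub, hσmul, hσmul, hσσ, h13]
  intro X
  simp only [LinearMap.add_apply, LinearMap.sub_apply, LinearMap.comp_apply,
    hP12', hP13', hP23']
  rw [adc_aux (e12 r) (e13 r) X, adc_aux (e12 r) (e23 r) X, adc_aux (e13 r) (e23 r) X]
  simp only [add_mul, mul_add, sub_mul, mul_sub]
  abel
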